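/- Let D ≥ 0 and N be real numbers with N > D, let C₂, M, T′ > 0, and let b_k : (0, T′] → ℝ for k ∈ ℕ be continuous nonnegative functions such that (i) for each k there is a constant B_k with b_k(t) ≤ B_k·t^{N+3/2} on (0,T′], (ii) b₀(t) ≤ C₂·t^{N+3/2} for all t ∈ (0,T′], and (iii) b_{k+1}(t) ≤ C₂·t^{N+3/2} + M·t^D·∫_0^t b_k(s)·s^{−D−1/2} ds for all k ∈ ℕ and t ∈ (0,T′]. Then for every C > C₂ there exists T ∈ (0,T′] such that b_k(t) ≤ C·t^{N+3/2} for every k ∈ ℕ and every t ∈ (0,T]. -/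

import Mathlib

open MeasureTheory

/-- Absorption lemma for the Picard iterates (analytic core of Lemma 7.5):
choosing the final time small enough yields a bound uniform in `k`. -/
theorem stmt12 (D N C₂ M T' : ℝ) (hD : 0 ≤ D) (hND : D < N)
    (hC₂ : 0 < C₂) (hM : 0 < M) (hT' : 0 < T')
    (b : ℕ → ℝ → ℝ)
    (hcont : ∀ k : ℕ, ContinuousOn (b k) (Set.Ioc 0 T'))
    (hnonneg : ∀ k : ℕ, ∀ t ∈ Set.Ioc (0:ℝ) T', 0 ≤ b k t)
    (hbound : ∀ k : ℕ, ∃ B : ℝ, ∀ t ∈ Set.Ioc (0:ℝ) T', b k t ≤ B * t ^ (N + 3/2))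
    (h0 : ∀ t ∈ Set.Ioc (0:ℝ) T', b 0 t ≤ C₂ * t ^ (N + 3/2))
    (hrec : ∀ k : ℕ, ∀ t ∈ Set.Ioc (0:ℝ) T',
      b (k + 1) t ≤ C₂ * t ^ (N + 3/2)
        + M * t ^ D * ∫ s in Set.Ioc (0:ℝ) t, b k s * s ^ (-D - 1/2)) :
    ∀ C : ℝ, C₂ < C → ∃ T : ℝ, 0 < T ∧ T ≤ T' ∧
      ∀ k : ℕ, ∀ t ∈ Set.Ioc (0:ℝ) T, b k t ≤ C * t ^ (N + 3/2) := by
  intro C hC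
  have hC0 : 0 < C := hC₂.trans hC
  have he : (0:ℝ) < N - D + 2 := by linarith
  set K : ℝ := (C - C₂) * (N - D + 2) / (M * C) with hKdef
  have hK0 : 0 < K := div_pos (mul_pos (by linarith) he) (mul_pos hM hC0)
  refine ⟨min T' (K * K), lt_min hT' (mul_pos hK0 hK0), min_le_left _ _, ?_⟩
  set T := min T' (K * K) with hTdef
  have hTT' : T ≤ T' := min_le_left _ _
  have hTK : T ≤ K * K := min_le_right _ _
  intro k
  induction k with
  | zero =>
    intro t ht
    have ht' : t ∈ Set.Ioc (0:ℝ) T' := ⟨ht.1, ht.2.trans hTT'⟩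
    have h1 := h0 t ht'
    have h2 : (0:ℝ) ≤ t ^ (N + 3/2) := Real.rpow_nonneg ht.1.le _
    nlinarith
  | succ k IH =>
    intro t ht
    have ht0 : 0 < t := ht.1
    have ht' : t ∈ Set.Ioc (0:ℝ) T' := ⟨ht.1, ht.2.trans hTT'⟩
    have hsub : Set.Ioc (0:ℝ) t ⊆ Set.Ioc 0 T := fun s hs => ⟨hs.1, hs.2.trans ht.2⟩
    have hsub' : Set.Ioc (0:ℝ) t ⊆ Set.Ioc 0 T' := fun s hs => ⟨hs.1, hs.2.trans ht'.2⟩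
    -- pointwise bound on the integrand
    have hptwise : ∀ s ∈ Set.Ioc (0:ℝ) t,
        b k s * s ^ (-D - 1/2) ≤ C * s ^ (N + 1 - D) := by
      intro s hs
      have hs0 : 0 < s := hs.1
      have h1 : b k s ≤ C * s ^ (N + 3/2) := IH s (hsub hs)
      have h2 : (0:ℝ) < s ^ (-D - 1/2) := Real.rpow_pos_of_pos hs0 _
      calc b k s * s ^ (-D - 1/2) ≤ C * s ^ (N + 3/2) * s ^ (-D - 1/2) :=
            mul_le_mul_of_nonneg_right h1 h2.le
        _ = C * s ^ (N + 1 - D) := by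
            rw [mul_assoc, ← Real.rpow_add hs0]
            congr 1
            ring
    -- integrability of the dominating function
    have hgint : IntegrableOn (fun s => C * s ^ (N + 1 - D)) (Set.Ioc 0 t) := by
      have := (intervalIntegral.intervalIntegrable_rpow' (a := 0) (b := t)
        (r := N + 1 - D) (by linarith)).const_mul C
      exact this.1
    -- continuity / measurability of the integrand
    have hmeas : ContinuousOn (fun s => b k s * s ^ (-D - 1/2)) (Set.Ioc 0 t) := by
      apply ContinuousOn.mul ((hcont k).mono hsub')
      intro s hs
      exact (Real.continuousAt_rpow_const s _ (Or.inl hs.1.ne')).continuousWithinAt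
    have hfint : IntegrableOn (fun s => b k s * s ^ (-D - 1/2)) (Set.Ioc 0 t) := by
      apply Integrable.mono' hgint (hmeas.aestronglyMeasurable measurableSet_Ioc)
      rw [ae_restrict_iff' measurableSet_Ioc]
      filter_upwards with s hs
      have hb : 0 ≤ b k s := hnonneg k s (hsub' hs)
      have h2 : (0:ℝ) ≤ s ^ (-D - 1/2) := (Real.rpow_pos_of_pos hs.1 _).le
      rw [Real.norm_eq_abs, abs_of_nonneg (mul_nonneg hb h2)]
      exact hptwise s hs
    -- bound the integral
    have hint : (∫ s in Set.Ioc (0:ℝ) t, b k s * s ^ (-D - 1/2))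
        ≤ ∫ s in Set.Ioc (0:ℝ) t, C * s ^ (N + 1 - D) :=
      setIntegral_mono_on hfint hgint measurableSet_Ioc hptwise
    have hval : (∫ s in Set.Ioc (0:ℝ) t, C * s ^ (N + 1 - D))
        = C * (t ^ (N + 2 - D) / (N - D + 2)) := by
      rw [← intervalIntegral.integral_of_le ht0.le, intervalIntegral.integral_const_mul,
        integral_rpow (Or.inl (by linarith)), Real.zero_rpow (by linarith)]
      rw [show N + 1 - D + 1 = N + 2 - D by ring]
      ring_nf
    -- square-root absorption
    have hsqrt : t ^ ((1:ℝ)/2) ≤ K := by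
      have h1 : t ^ ((1:ℝ)/2) ≤ (K * K) ^ ((1:ℝ)/2) :=
        Real.rpow_le_rpow ht0.le (ht.2.trans hTK) (by norm_num)
      have h2 : (K * K) ^ ((1:ℝ)/2) = K := by
        rw [show K * K = K ^ (2:ℝ) by rw [show (2:ℝ) = ((2:ℕ):ℝ) by norm_num, Real.rpow_natCast]; ring, ← Real.rpow_mul hK0.le]
        norm_num
      linarith [h2 ▸ h1]
    -- power algebra
    have hpow : t ^ D * t ^ (N + 2 - D) = t ^ (N + 3/2) * t ^ ((1:ℝ)/2) := by
      rw [← Real.rpow_add ht0, ← Real.rpow_add ht0]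
      congr 1
      ring
    have hα : (0:ℝ) ≤ t ^ (N + 3/2) := Real.rpow_nonneg ht0.le _
    have htD : (0:ℝ) ≤ t ^ D := Real.rpow_nonneg ht0.le _
    have hmain := hrec k t ht'
    have hstep : M * t ^ D * (∫ s in Set.Ioc (0:ℝ) t, b k s * s ^ (-D - 1/2))
        ≤ M * C * (t ^ (N + 3/2) * t ^ ((1:ℝ)/2)) / (N - D + 2) := by
      calc M * t ^ D * (∫ s in Set.Ioc (0:ℝ) t, b k s * s ^ (-D - 1/2))
          ≤ M * t ^ D * (C * (t ^ (N + 2 - D) / (N - D + 2))) := by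
            apply mul_le_mul_of_nonneg_left _ (mul_nonneg hM.le htD)
            rw [← hval]; exact hint
        _ = M * C * (t ^ D * t ^ (N + 2 - D)) / (N - D + 2) := by ring
        _ = M * C * (t ^ (N + 3/2) * t ^ ((1:ℝ)/2)) / (N - D + 2) := by rw [hpow]
    have habsorb : M * C * (t ^ (N + 3/2) * t ^ ((1:ℝ)/2)) / (N - D + 2)
        ≤ (C - C₂) * t ^ (N + 3/2) := by
      rw [div_le_iff₀ he]
      have h1 : M * C * (t ^ (N + 3/2) * t ^ ((1:ℝ)/2)) ≤ M * C * (t ^ (N + 3/2) * K) := by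
        apply mul_le_mul_of_nonneg_left _ (mul_pos hM hC0).le
        exact mul_le_mul_of_nonneg_left hsqrt hα
      have h2 : M * C * (t ^ (N + 3/2) * K) = (C - C₂) * t ^ (N + 3/2) * (N - D + 2) := by
        rw [hKdef]
        field_simp
      linarith
    linarith
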